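/- If f : ℝ² → ℝ is a homogeneous polynomial of degree k ≥ 1 and h : ℝ² → ℝ² is a differentiable map with h(0) = 0 such that f ∘ h = f, then f ∘ (Dh(0)) = f, where Dh(0) is the derivative (tangent map) of h at 0. -/

import Mathlib

open Filter Topology

lemma hom_eval_smul {k : ℕ} {P : MvPolynomial (Fin 2) ℝ} (hP : P.IsHomogeneous k)
    (c : ℝ) (x : Fin 2 → ℝ) :
    MvPolynomial.eval (c • x) P = c ^ k * MvPolynomial.eval x P := by
  rw [MvPolynomial.eval_eq', MvPolynomial.eval_eq', Finset.mul_sum]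
  apply Finset.sum_congr rfl
  intro d hd
  have hdk : ∑ i, d i = k := by
    have := hP (MvPolynomial.mem_support_iff.mp hd)
    rw [← this]
    simp [Finsupp.weight_apply, Finsupp.sum_fintype]
  have : ∏ i, (c • x) i ^ d i = c ^ k * ∏ i, x i ^ d i := by
    simp only [Pi.smul_apply, smul_eq_mul, mul_pow]
    rw [Finset.prod_mul_distrib, Finset.prod_pow_eq_pow_sum, hdk]
  rw [this]; ring

/-- If `f` is (the evaluation of) a homogeneous polynomial of degree `k ≥ 1` on `ℝ²`
and `h` is differentiable at `0` with `h 0 = 0` and `f ∘ h = f`, then `f ∘ Dh(0) = f`. -/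
theorem stmt0 (k : ℕ) (hk : 1 ≤ k) (P : MvPolynomial (Fin 2) ℝ)
    (hP : P.IsHomogeneous k)
    (f : (Fin 2 → ℝ) → ℝ) (hf : ∀ x, f x = MvPolynomial.eval x P)
    (h : (Fin 2 → ℝ) → (Fin 2 → ℝ)) (D : (Fin 2 → ℝ) →L[ℝ] (Fin 2 → ℝ))
    (hdiff : HasFDerivAt h D 0) (h0 : h 0 = 0)
    (hinv : ∀ x, f (h x) = f x) :
    ∀ x, f (D x) = f x := by
  intro x
  have hhom : ∀ (c : ℝ) (y : Fin 2 → ℝ), f (c • y) = c ^ k * f y := fun c y => by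
    rw [hf, hf, hom_eval_smul hP]
  have hcont : Continuous f := by
    have : f = fun y => MvPolynomial.eval y P := funext hf
    rw [this]; exact MvPolynomial.continuous_eval P
  -- line derivative
  have hl : Tendsto (fun t : ℝ => t⁻¹ • (h (0 + t • x) - h 0)) (𝓝[≠] 0) (𝓝 (D x)) :=
    (hdiff.hasLineDerivAt x).tendsto_slope_zero
  have hl' : Tendsto (fun t : ℝ => t⁻¹ • h (t • x)) (𝓝[≠] 0) (𝓝 (D x)) := by
    simpa [h0] using hl
  have h1 : Tendsto (fun t : ℝ => f (t⁻¹ • h (t • x))) (𝓝[≠] 0) (𝓝 (f (D x))) :=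
    (hcont.tendsto _).comp hl'
  have h2 : Tendsto (fun t : ℝ => f (t⁻¹ • h (t • x))) (𝓝[≠] 0) (𝓝 (f x)) := by
    have heq : ∀ t : ℝ, t ≠ 0 → f (t⁻¹ • h (t • x)) = f x := by
      intro t ht
      rw [hhom, hinv, hhom]
      field_simp
      rw [← mul_pow, one_div, inv_mul_cancel₀ ht, one_pow, one_mul]
    refine Tendsto.congr' ?_ tendsto_const_nhds
    filter_upwards [self_mem_nhdsWithin] with t ht
    exact (heq t ht).symm
  exact tendsto_nhds_unique h1 h2
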